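/- There exists a finite colouring Ψ' of the set ℕ^(2) = {(a,b) ∈ ℕ × ℕ : a < b} (i.e. a function Ψ' : ℕ^(2) → Fin r for some r ∈ ℕ) such that there do not exist two strictly increasing sequences of natural numbers (a_n)_{n≥1} and (b_n)_{n≥1} with a_i < b_i for every i ≥ 1 for which the set {(a_n + a_m − 1, b_n + b_m) : n < m} ∪ {(a_n, b_m) : n < m} is monochromatic under Ψ'. -/

import Mathlib

/-- There exists a finite colouring `Ψ'` of `ℕ^(2)` such that there do not exist
strictly increasing sequences `(a_n)`, `(b_n)` of positive integers with `a_i < b_i`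
for all `i`, for which `{(a_n + a_m - 1, b_n + b_m) : n < m} ∪ {(a_n, b_m) : n < m}`
is monochromatic. -/
theorem stmt_2 :
    ∃ (r : ℕ) (Ψ' : ℕ × ℕ → Fin r),
      ¬ ∃ (a b : ℕ → ℕ) (c : Fin r),
        StrictMono a ∧ StrictMono b ∧ (∀ i, 0 < a i) ∧ (∀ i, a i < b i) ∧
        (∀ n m, n < m →
          Ψ' (a n + a m - 1, b n + b m) = c ∧ Ψ' (a n, b m) = c) := by
  classical
  refine ⟨4, fun p => ⟨(if p.1 ≤ 2 * p.2.factorization 2 then 2 else 0)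
      + p.2.factorization 2 % 2, by split <;> omega⟩, ?_⟩
  rintro ⟨a, b, c, ha, hb, hapos, hab, h⟩
  have hb0 : ∀ m, b m ≠ 0 := fun m => by have h1 := hapos m; have h2 := hab m; omega
  have h1 : ∀ n m : ℕ, n < m →
      (if a n ≤ 2 * (b m).factorization 2 then 2 else 0)
        + (b m).factorization 2 % 2 = c.val :=
    fun n m hnm => congrArg Fin.val (h n m hnm).2
  have h2 : ∀ n m : ℕ, n < m →
      (if a n + a m - 1 ≤ 2 * (b n + b m).factorization 2 then 2 else 0)
        + (b n + b m).factorization 2 % 2 = c.val :=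
    fun n m hnm => congrArg Fin.val (h n m hnm).1
  have hmono : ∀ n, n ≤ a n := by
    intro n
    induction n with
    | zero => omega
    | succ k ih => have := ha (by omega : k < k + 1); omega
  by_cases hcg : 2 ≤ c.val
  · -- first component true
    have key : ∀ n m, n < m → a n + a m - 1 ≤ 2 * (b n + b m).factorization 2 := by
      intro n m hnm
      have hh := h2 n m hnm
      by_cases hif : a n + a m - 1 ≤ 2 * (b n + b m).factorization 2
      · exact hif
      · rw [if_neg hif] at hh; omega
    have hdvd : ∀ m, 2 ≤ m → 2 ^ (a m / 2) ∣ b 1 - b 0 := by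
      intro m hm
      have e0 := key 0 m (by omega)
      have e1 := key 1 m (by omega)
      have ha0 := hapos 0
      have ha1 := hapos 1
      have hbm := hb0 m
      have hb00 := hb0 0
      have hb11 := hb0 1
      have d0 : 2 ^ (a m / 2) ∣ b 0 + b m :=
        (Nat.Prime.pow_dvd_iff_le_factorization Nat.prime_two (by omega)).mpr (by omega)
      have d1 : 2 ^ (a m / 2) ∣ b 1 + b m :=
        (Nat.Prime.pow_dvd_iff_le_factorization Nat.prime_two (by omega)).mpr (by omega)
      have hd := Nat.dvd_sub d1 d0
      rwa [show (b 1 + b m) - (b 0 + b m) = b 1 - b 0 by omega] at hd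
    have hm := hdvd (2 * b 1 + 2) (by omega)
    have hb01 : b 0 < b 1 := hb (by omega)
    have hle : 2 ^ (a (2 * b 1 + 2) / 2) ≤ b 1 - b 0 := Nat.le_of_dvd (by omega) hm
    have hge : 2 * b 1 + 2 ≤ a (2 * b 1 + 2) := hmono _
    have hpow : 2 ^ (b 1 + 1) ≤ 2 ^ (a (2 * b 1 + 2) / 2) :=
      Nat.pow_le_pow_right (by omega) (by omega)
    have hlt : b 1 < 2 ^ (b 1) := Nat.lt_two_pow_self
    have hps : (2:ℕ) ^ (b 1 + 1) = 2 * 2 ^ (b 1) := by rw [pow_succ]; ring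
    omega
  · -- first component false
    have hfalse : ∀ n m, n < m → ¬ (a n ≤ 2 * (b m).factorization 2) := by
      intro n m hnm hif
      have hh := h1 n m hnm
      rw [if_pos hif] at hh; omega
    have hpar1 : ∀ m, 1 ≤ m → (b m).factorization 2 % 2 = c.val := by
      intro m hm
      have hh := h1 0 m (by omega)
      rw [if_neg (hfalse 0 m (by omega))] at hh; omega
    have hpar2 : ∀ n m, n < m → (b n + b m).factorization 2 % 2 = c.val := by
      intro n m hnm
      have hh := h2 n m hnm
      by_cases hif : a n + a m - 1 ≤ 2 * (b n + b m).factorization 2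
      · rw [if_pos hif] at hh; omega
      · rw [if_neg hif] at hh; omega
    have hbound : ∀ m, 1 ≤ m → (b m).factorization 2 < a 0 := by
      intro m hm
      have := hfalse 0 m (by omega)
      have := hapos 0
      omega
    obtain ⟨s₀, -, hfib⟩ :=
      Finset.exists_lt_card_fiber_of_mul_lt_card_of_maps_to
        (s := Finset.Icc 1 (2 * a 0 + 2)) (t := Finset.range (a 0))
        (f := fun m => (b m).factorization 2) (n := 2)
        (fun m hm => by
          simp only [Finset.mem_Icc] at hm
          exact Finset.mem_range.mpr (hbound m hm.1))
        (by rw [Nat.card_Icc, Finset.card_range]; omega)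
    obtain ⟨x, y, z, hx, hy, hz, hxy, hxz, hyz⟩ := Finset.two_lt_card_iff.mp hfib
    simp only [Finset.mem_filter, Finset.mem_Icc] at hx hy hz
    have inner : ∀ u w, 1 ≤ u → u < w → (b u).factorization 2 = s₀ →
        (b w).factorization 2 = s₀ → 2 ^ (s₀ + 2) ∣ b u + b w := by
      intro u w hu huw hVu hVw
      have hu0 := hb0 u
      have hw0 := hb0 w
      have hcu : ¬ 2 ∣ (b u / 2 ^ s₀) := by
        have := Nat.not_dvd_ordCompl Nat.prime_two hu0
        rwa [hVu] at this
      have hcw : ¬ 2 ∣ (b w / 2 ^ s₀) := by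
        have := Nat.not_dvd_ordCompl Nat.prime_two hw0
        rwa [hVw] at this
      have hqu : 2 ^ s₀ * (b u / 2 ^ s₀) = b u := by
        have := Nat.ordProj_mul_ordCompl_eq_self (b u) 2
        rwa [hVu] at this
      have hqw : 2 ^ s₀ * (b w / 2 ^ s₀) = b w := by
        have := Nat.ordProj_mul_ordCompl_eq_self (b w) 2
        rwa [hVw] at this
      obtain ⟨d, hd⟩ : 2 ∣ (b u / 2 ^ s₀ + b w / 2 ^ s₀) := by omega
      have hsum : b u + b w = 2 ^ (s₀ + 1) * d := by
        rw [← hqu, ← hqw, ← Nat.mul_add, hd, pow_succ]; ring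
      have hge1 : s₀ + 1 ≤ (b u + b w).factorization 2 :=
        (Nat.Prime.pow_dvd_iff_le_factorization Nat.prime_two (by omega)).mp ⟨d, hsum⟩
      have hp := hpar2 u w huw
      have hp0 := hpar1 u hu
      rw [hVu] at hp0
      exact (Nat.Prime.pow_dvd_iff_le_factorization Nat.prime_two (by omega)).mpr (by omega)
    have hsum2 : ∀ u w, 1 ≤ u → 1 ≤ w → u ≠ w → (b u).factorization 2 = s₀ →
        (b w).factorization 2 = s₀ → 2 ^ (s₀ + 2) ∣ b u + b w := by
      intro u w hu hw hne hVu hVw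
      rcases hne.lt_or_gt with hlt | hlt
      · exact inner u w hu hlt hVu hVw
      · rw [add_comm (b u)]; exact inner w u hw hlt hVw hVu
    have dxy := hsum2 x y hx.1.1 hy.1.1 hxy hx.2 hy.2
    have dxz := hsum2 x z hx.1.1 hz.1.1 hxz hx.2 hz.2
    have dyz := hsum2 y z hy.1.1 hz.1.1 hyz hy.2 hz.2
    have h2bx : 2 ^ (s₀ + 2) ∣ 2 * b x := by
      have hd := Nat.dvd_sub (Nat.dvd_add dxy dxz) dyz
      rwa [show (b x + b y) + (b x + b z) - (b y + b z) = 2 * b x by omega] at hd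
    obtain ⟨t', ht'⟩ := h2bx
    have hbx : 2 ^ (s₀ + 1) ∣ b x := by
      refine ⟨t', ?_⟩
      have hp : (2:ℕ) ^ (s₀ + 2) = 2 * 2 ^ (s₀ + 1) := by rw [pow_succ]; ring
      rw [hp] at ht'
      exact Nat.eq_of_mul_eq_mul_left (by norm_num)
        (ht'.trans (by ring) : 2 * b x = 2 * (2 ^ (s₀ + 1) * t'))
    have hfin := (Nat.Prime.pow_dvd_iff_le_factorization Nat.prime_two (hb0 x)).mp hbx
    rw [hx.2] at hfin
    omega
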